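/- Let n ≥ 1, let ω = exp(2πi/(n+1)) ∈ ℂ, and let A be an (n+1)×(n+1) complex matrix. If there exists an invertible (n+1)×(n+1) complex matrix P such that P * A * P⁻¹ = ω • A, then the characteristic polynomial of A has the form X^(n+1) − c for some constant c ∈ ℂ (i.e., all coefficients of the characteristic polynomial in degrees 1 through n vanish). -/

import Mathlib

open Matrix Polynomial

lemma my_coeff_comp_C_mul_X (p : ℂ[X]) (a : ℂ) (k : ℕ) :
    (p.comp (C a * X)).coeff k = a ^ k * p.coeff k := by
  induction p using Polynomial.induction_on' with
  | add p q hp hq => simp [add_comp, hp, hq, mul_add]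
  | monomial m b =>
      simp only [monomial_comp, mul_pow, ← C_pow, coeff_monomial]
      rw [show C b * (C (a ^ m) * X ^ m) = C (b * a ^ m) * X ^ m by
        rw [C_mul]; ring, coeff_C_mul, coeff_X_pow]
      by_cases h : k = m
      · subst h; simp [mul_comm]
      · simp [Ne.symm h, h]

lemma my_eval_charpoly {m : ℕ} (M : Matrix (Fin m) (Fin m) ℂ) (x : ℂ) :
    M.charpoly.eval x = (x • (1 : Matrix (Fin m) (Fin m) ℂ) - M).det := by
  rw [Matrix.charpoly, ← Polynomial.coe_evalRingHom, RingHom.map_det]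
  congr 1
  ext i j
  by_cases h : i = j <;>
    simp [charmatrix_apply, Matrix.one_apply, Matrix.smul_apply, h]

/-- If an `(n+1) × (n+1)` complex matrix `A` is similar to `ω • A`, where
`ω = exp(2πi/(n+1))`, then the characteristic polynomial of `A` has the form
`X^(n+1) - c` for some constant `c : ℂ`. -/
theorem charpoly_eq_pow_sub_const_of_similar_smul
    (n : ℕ) (hn : 1 ≤ n) (ω : ℂ)
    (hω : ω = Complex.exp (2 * Real.pi * Complex.I / (n + 1)))
    (A : Matrix (Fin (n + 1)) (Fin (n + 1)) ℂ)
    (P : Matrix (Fin (n + 1)) (Fin (n + 1)) ℂ) (hP : IsUnit P)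
    (hsim : P * A * P⁻¹ = ω • A) :
    ∃ c : ℂ, A.charpoly = X ^ (n + 1) - C c := by
  have hprim : IsPrimitiveRoot ω (n + 1) := by
    rw [hω]
    have := Complex.isPrimitiveRoot_exp (n + 1) (Nat.succ_ne_zero n)
    convert this using 2
    push_cast; ring
  have hω1 : ω ^ (n + 1) = 1 := hprim.pow_eq_one
  have hω0 : ω ≠ 0 := by
    intro h
    rw [h] at hω1
    simp at hω1
  have hPdet : IsUnit P.det := (Matrix.isUnit_iff_isUnit_det P).mp hP
  have hPP : P * P⁻¹ = 1 := Matrix.mul_nonsing_inv P hPdet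
  have hdet1 : P.det * P⁻¹.det = 1 := by rw [← Matrix.det_mul, hPP, Matrix.det_one]
  set p := A.charpoly with hp
  -- key functional equation : p(x) = p(ω⁻¹ x)
  have key : ∀ x : ℂ, p.eval x = p.eval (ω⁻¹ * x) := by
    intro x
    have h1 : p.eval x = (x • (1 : Matrix (Fin (n+1)) (Fin (n+1)) ℂ) - ω • A).det := by
      rw [my_eval_charpoly, ← hsim]
      have : x • (1 : Matrix (Fin (n+1)) (Fin (n+1)) ℂ) - P * A * P⁻¹
          = P * (x • (1 : Matrix (Fin (n+1)) (Fin (n+1)) ℂ) - A) * P⁻¹ := by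
        rw [Matrix.mul_sub, Matrix.sub_mul]
        congr 1
        rw [Matrix.mul_smul, Matrix.smul_mul, Matrix.mul_one, hPP]
      rw [this, Matrix.det_mul, Matrix.det_mul]
      rw [mul_comm P.det, mul_assoc, hdet1, mul_one]
    have h2 : x • (1 : Matrix (Fin (n+1)) (Fin (n+1)) ℂ) - ω • A
        = ω • ((ω⁻¹ * x) • (1 : Matrix (Fin (n+1)) (Fin (n+1)) ℂ) - A) := by
      have hx : ω * (ω⁻¹ * x) = x := by field_simp
      rw [smul_sub, smul_smul, hx]
    rw [h1, h2, Matrix.det_smul, my_eval_charpoly]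
    simp [Fintype.card_fin, hω1]
  -- hence p.comp (C ω⁻¹ * X) = p
  have hcomp : p.comp (C ω⁻¹ * X) = p := by
    apply Polynomial.funext
    intro x
    rw [eval_comp]
    simp [key x]
  have hcoeff : ∀ k, (ω⁻¹) ^ k * p.coeff k = p.coeff k := by
    intro k
    rw [← my_coeff_comp_C_mul_X, hcomp]
  have hvanish : ∀ k, 1 ≤ k → k ≤ n → p.coeff k = 0 := by
    intro k hk1 hk2
    have hne : (ω⁻¹) ^ k ≠ 1 := by
      rw [Ne, inv_pow, inv_eq_one]
      exact hprim.pow_ne_one_of_pos_of_lt (by omega) (by omega)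
    by_contra h
    apply hne
    have h2 : ω⁻¹ ^ k * p.coeff k = 1 * p.coeff k := by rw [hcoeff k, one_mul]
    exact mul_right_cancel₀ h h2
  have hmonic : p.Monic := Matrix.charpoly_monic A
  have hdeg : p.natDegree = n + 1 := by
    rw [hp, Matrix.charpoly_natDegree_eq_dim, Fintype.card_fin]
  refine ⟨-p.coeff 0, ?_⟩
  ext k
  rw [coeff_sub, coeff_X_pow, coeff_C]
  rcases Nat.lt_or_ge k 1 with hk | hk
  · interval_cases k
    simp [Nat.succ_ne_zero]
  rcases Nat.lt_or_ge k (n + 1) with hk2 | hk2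
  · rw [hvanish k hk (by omega)]
    simp [show k ≠ n + 1 by omega, show k ≠ 0 by omega]
  rcases Nat.eq_or_lt_of_le hk2 with hk3 | hk3
  · rw [← hk3]
    simp only [if_pos rfl, if_neg (Nat.succ_ne_zero n), sub_zero]
    rw [← hdeg]
    exact hmonic.coeff_natDegree
  · rw [coeff_eq_zero_of_natDegree_lt (by omega)]
    simp [show k ≠ n + 1 by omega, show k ≠ 0 by omega]
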